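/- For every fixed j ≥ 0 and k ≥ 2, as n → ∞, the ratio ((k(n-j))!/((k!)^{n-j}(n-j)!)) · C(kn - j(k-1), j) / ((kn)!/((k!)^n n!)) is asymptotic to (k! k^{1-k} n^{2-k})^j / j!. -/

import Mathlib

open Filter Finset Asymptotics Topology

private lemma castDescFact (n j : ℕ) (h : j ≤ n) :
    ((n.descFactorial j : ℕ) : ℝ) = ∏ i ∈ Finset.range j, ((n : ℝ) - i) := by
  rw [Nat.descFactorial_eq_prod_range, Nat.cast_prod]
  refine Finset.prod_congr rfl fun i hi => ?_
  rw [Nat.cast_sub (le_trans (le_of_lt (Finset.mem_range.mp hi)) h)]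

private lemma tendstoRatio (a c : ℝ) (ha : 0 < a) :
    Tendsto (fun n : ℕ => (a * n - c) / (a * n)) atTop (𝓝 1) := by
  have h1 : Tendsto (fun n : ℕ => a * (n : ℝ)) atTop atTop :=
    tendsto_natCast_atTop_atTop.const_mul_atTop ha
  have h2 : Tendsto (fun n : ℕ => c / (a * (n : ℝ))) atTop (𝓝 0) :=
    Tendsto.div_atTop tendsto_const_nhds h1
  have h3 : Tendsto (fun n : ℕ => 1 - c / (a * (n : ℝ))) atTop (𝓝 1) := by
    simpa using tendsto_const_nhds.sub h2
  refine Tendsto.congr' ?_ h3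
  filter_upwards [eventually_ge_atTop 1] with n hn
  have hn0 : (0 : ℝ) < n := by exact_mod_cast Nat.lt_of_lt_of_le Nat.zero_lt_one hn
  have : a * (n : ℝ) ≠ 0 := by positivity
  field_simp

/-- For fixed `j ≥ 0` and `k ≥ 2`, as `n → ∞`, the `j`-th binomial moment
`((k(n-j))!/((k!)^{n-j}(n-j)!)) C(kn - j(k-1), j) / ((kn)!/((k!)^n n!))` is asymptotic to
`λ^j / j!` with `λ = k! k^{1-k} n^{2-k}`. -/
theorem stmt13 (k j : ℕ) (hk : 2 ≤ k) :
    Asymptotics.IsEquivalent Filter.atTop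
      (fun n : ℕ =>
        ((Nat.factorial (k * (n - j)) : ℝ) /
            ((Nat.factorial k : ℝ) ^ (n - j) * (Nat.factorial (n - j) : ℝ)) *
          (Nat.choose (k * n - j * (k - 1)) j : ℝ)) /
        ((Nat.factorial (k * n) : ℝ) /
          ((Nat.factorial k : ℝ) ^ n * (Nat.factorial n : ℝ))))
      (fun n : ℕ =>
        ((Nat.factorial k : ℝ) * (k : ℝ) ^ ((1 : ℤ) - (k : ℤ)) *
            (n : ℝ) ^ ((2 : ℤ) - (k : ℤ))) ^ j /
          (Nat.factorial j : ℝ)) := by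
  have hk0 : 0 < k := by omega
  have hkR : (0 : ℝ) < k := by exact_mod_cast hk0
  rw [isEquivalent_iff_tendsto_one]
  · -- tendsto of ratio to 1
    have htend : Tendsto (fun n : ℕ =>
        (∏ i ∈ Finset.range j, (((n : ℝ)) - i) / n) *
        (∏ i ∈ Finset.range j,
          ((k : ℝ) * n - ((j * (k - 1) + i : ℕ) : ℝ)) / ((k : ℝ) * n)) /
        (∏ i ∈ Finset.range (k * j), ((k : ℝ) * n - i) / ((k : ℝ) * n)))
        atTop (𝓝 1) := by
      have t1 : Tendsto (fun n : ℕ => ∏ i ∈ Finset.range j, (((n : ℝ)) - i) / n)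
          atTop (𝓝 (∏ _i ∈ Finset.range j, (1 : ℝ))) := by
        refine tendsto_finset_prod _ fun i _ => ?_
        simpa using tendstoRatio 1 (i : ℝ) one_pos
      have t2 : Tendsto (fun n : ℕ => ∏ i ∈ Finset.range j,
          ((k : ℝ) * n - ((j * (k - 1) + i : ℕ) : ℝ)) / ((k : ℝ) * n))
          atTop (𝓝 (∏ _i ∈ Finset.range j, (1 : ℝ))) := by
        refine tendsto_finset_prod _ fun i _ => ?_
        exact tendstoRatio k _ hkR
      have t3 : Tendsto (fun n : ℕ => ∏ i ∈ Finset.range (k * j),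
          ((k : ℝ) * n - i) / ((k : ℝ) * n))
          atTop (𝓝 (∏ _i ∈ Finset.range (k * j), (1 : ℝ))) := by
        refine tendsto_finset_prod _ fun i _ => ?_
        exact tendstoRatio k _ hkR
      have := (t1.mul t2).div t3 (by simp)
      simp only [Finset.prod_const_one, mul_one, div_one] at this
      exact this
    refine Tendsto.congr' ?_ htend
    filter_upwards [eventually_ge_atTop (j + 1)] with n hn
    -- pointwise equality for n ≥ j + 1
    have hjn : j ≤ n := by omega
    have hn1 : 1 ≤ n := by omega
    have hnR : (0 : ℝ) < n := by exact_mod_cast hn1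
    have hkjkn : k * j ≤ k * n := Nat.mul_le_mul_left k hjn
    have hjk1 : j * (k - 1) + j ≤ k * n := by
      have : j * (k - 1) + j = j * k := by rw [← Nat.mul_succ]; congr 1; omega
      rw [this, mul_comm]; exact hkjkn
    -- cast of the shifted quantity
    have hmcast : ((k * n - j * (k - 1) : ℕ) : ℝ) = (k : ℝ) * n - (j * (k - 1) : ℕ) := by
      rw [Nat.cast_sub (by omega)]; push_cast; ring
    -- key factorial identities over ℝ
    have e1 : ((n.factorial : ℕ) : ℝ)
        = ((n - j).factorial : ℝ) * ∏ i ∈ Finset.range j, ((n : ℝ) - i) := by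
      rw [← Nat.factorial_mul_descFactorial hjn, Nat.cast_mul, castDescFact n j hjn]
    have e2 : (((k * n).factorial : ℕ) : ℝ)
        = ((k * (n - j)).factorial : ℝ)
          * ∏ i ∈ Finset.range (k * j), ((k : ℝ) * n - i) := by
      rw [← Nat.factorial_mul_descFactorial hkjkn, Nat.cast_mul,
        castDescFact _ _ hkjkn, Nat.mul_sub]
      congr 1
      refine Finset.prod_congr rfl fun i _ => ?_
      push_cast; ring
    have e3 : (((k * n - j * (k - 1)).choose j : ℕ) : ℝ)
        = (∏ i ∈ Finset.range j,
            ((k : ℝ) * n - ((j * (k - 1) + i : ℕ) : ℝ))) / (j.factorial : ℝ) := by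
      have hd : j ≤ k * n - j * (k - 1) := by omega
      have := castDescFact (k * n - j * (k - 1)) j hd
      rw [Nat.descFactorial_eq_factorial_mul_choose, Nat.cast_mul] at this
      rw [eq_div_iff (by exact_mod_cast j.factorial_ne_zero), mul_comm, this]
      refine Finset.prod_congr rfl fun i _ => ?_
      rw [hmcast]; push_cast; ring
    have e4 : ((k.factorial : ℝ)) ^ n = (k.factorial : ℝ) ^ (n - j) * (k.factorial : ℝ) ^ j := by
      rw [← pow_add]; congr 1; omega
    -- zpow expansions
    have ez1 : (k : ℝ) ^ ((1 : ℤ) - (k : ℤ)) = (k : ℝ) / (k : ℝ) ^ k := by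
      rw [zpow_sub₀ (ne_of_gt hkR), zpow_one, zpow_natCast]
    have ez2 : (n : ℝ) ^ ((2 : ℤ) - (k : ℤ)) = (n : ℝ) ^ 2 / (n : ℝ) ^ k := by
      rw [zpow_sub₀ (ne_of_gt hnR), zpow_natCast]
      norm_num [zpow_two, sq]
    -- nonvanishing facts
    have hfk : (k.factorial : ℝ) ≠ 0 := by exact_mod_cast k.factorial_ne_zero
    have hfj : (j.factorial : ℝ) ≠ 0 := by exact_mod_cast j.factorial_ne_zero
    have hfnj : ((n - j).factorial : ℝ) ≠ 0 := by exact_mod_cast (n - j).factorial_ne_zero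
    have hfknj : ((k * (n - j)).factorial : ℝ) ≠ 0 := by
      exact_mod_cast (k * (n - j)).factorial_ne_zero
    have hn0 : (n : ℝ) ≠ 0 := ne_of_gt hnR
    have hk0' : (k : ℝ) ≠ 0 := ne_of_gt hkR
    have hd3 : (∏ i ∈ Finset.range (k * j), ((k : ℝ) * n - i)) ≠ 0 := by
      refine Finset.prod_ne_zero_iff.mpr fun i hi => ?_
      have hikn : i < k * n := lt_of_lt_of_le (Finset.mem_range.mp hi) hkjkn
      have : (i : ℝ) < (k : ℝ) * n := by exact_mod_cast hikn
      linarith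
    -- now pure algebra
    simp only [Pi.div_apply]
    rw [e1, e2, e3, e4, ez1, ez2]
    rw [Finset.prod_div_distrib, Finset.prod_div_distrib, Finset.prod_div_distrib]
    simp only [Finset.prod_const, Finset.card_range]
    field_simp
    simp only [div_pow]
    field_simp
    ring
  · -- eventual nonvanishing of the RHS
    filter_upwards [eventually_ge_atTop 1] with n hn
    have hnR : (0 : ℝ) < n := by exact_mod_cast hn
    have h1 : (0 : ℝ) < (k.factorial : ℝ) := by exact_mod_cast k.factorial_pos
    have h2 : (0 : ℝ) < (k : ℝ) ^ ((1 : ℤ) - (k : ℤ)) :=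
      zpow_pos (by exact_mod_cast hk0) _
    have h3 : (0 : ℝ) < (n : ℝ) ^ ((2 : ℤ) - (k : ℤ)) := zpow_pos hnR _
    have h4 : (0 : ℝ) < (j.factorial : ℝ) := by exact_mod_cast j.factorial_pos
    positivity
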